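/- Let G = (N, Δ, π) be an infinite bottleneck congestion game, and define ψ : Δ → ℝ≥0^{n·m} by ψ_{i,f}(ξ) = c_f(ℓ_f(ξ)) if f ∈ F_i(ξ) and ψ_{i,f}(ξ) = 0 otherwise. Then G has the LIP both for φ = π and for ψ: for every improving move (ξ, (ν_S, ξ_{−S})) of any nonempty coalition S ⊆ N, the vector (π_i(ν_S, ξ_{−S}))_{i∈N} is strictly sorted-lexicographically smaller than (π_i(ξ))_{i∈N}, and ψ(ν_S, ξ_{−S}) is strictly sorted-lexicographically smaller than ψ(ξ). -/

import Mathlib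

open Finset

/-- The vector `a` sorted in non-increasing order. -/
noncomputable def sortDesc {α : Type*} [LinearOrder α] {q : ℕ} (a : Fin q → α) : Fin q → α :=
  fun i => a (Tuple.sort a i.rev)

/-- `a` is strictly sorted-lexicographically smaller than `b`. -/
def SLexLt {α : Type*} [LinearOrder α] {q : ℕ} (a b : Fin q → α) : Prop :=
  ∃ m : Fin q, (∀ i, i < m → sortDesc a i = sortDesc b i) ∧ sortDesc a m < sortDesc b m

/-- Sorted-lexicographic comparison of vectors indexed by an arbitrary finite type. -/
def SLexLtOn {α : Type*} [LinearOrder α] {ι : Type*} [Fintype ι] (a b : ι → α) : Prop :=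
  SLexLt (a ∘ (Fintype.equivFin ι).symm) (b ∘ (Fintype.equivFin ι).symm)

/-- An improving move: some nonempty coalition `S` deviates (players outside `S`
keep their strategies) and every member of `S` strictly decreases her cost. -/
def ImprovingMove {ι : Type*} {X : ι → Type*} {β : Type*} [Preorder β]
    (π : (∀ i, X i) → ι → β) (x y : ∀ i, X i) : Prop :=
  ∃ S : Finset ι, S.Nonempty ∧ (∀ i ∉ S, y i = x i) ∧ ∀ i ∈ S, π y i < π x i

open scoped NNReal

/-- The load of facility `f` under a splittable strategy profile `ξ`:
the sum of all intensities put on pure strategies containing `f`. -/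
noncomputable def facLoad {ι F : Type*} [Fintype ι] [Fintype F] [DecidableEq F] {ni : ι → ℕ}
    (strat : ∀ i, Fin (ni i) → Finset F) (ξ : ∀ i, Fin (ni i) → ℝ≥0) (f : F) : ℝ≥0 :=
  ∑ i, ∑ j ∈ Finset.univ.filter (fun j => f ∈ strat i j), ξ i j

/-- The set `F_i(ξ)` of facilities used by player `i` under profile `ξ`. -/
noncomputable def usedFac {ι F : Type*} [Fintype F] [DecidableEq F] {ni : ι → ℕ}
    (strat : ∀ i, Fin (ni i) → Finset F) (ξ : ∀ i, Fin (ni i) → ℝ≥0) (i : ι) : Finset F :=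
  Finset.univ.filter (fun f => ∃ j, f ∈ strat i j ∧ 0 < ξ i j)

/-- The private (bottleneck) cost `π_i(ξ) = max_{f ∈ F_i(ξ)} c_f(ℓ_f(ξ))` of
player `i` in an infinite bottleneck congestion game. -/
noncomputable def btlCost {ι F : Type*} [Fintype ι] [Fintype F] [DecidableEq F] {ni : ι → ℕ}
    (c : F → ℝ≥0 → ℝ≥0) (strat : ∀ i, Fin (ni i) → Finset F)
    (ξ : ∀ i, Fin (ni i) → ℝ≥0) (i : ι) : ℝ≥0 :=
  (usedFac strat ξ i).sup (fun f => c f (facLoad strat ξ f))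


lemma antitone_sortDesc {q : ℕ} (a : Fin q → ℝ≥0) : Antitone (sortDesc a) := by
  intro i j hij
  exact Tuple.monotone_sort a (Fin.rev_le_rev.mpr hij)

lemma card_sortDesc {q : ℕ} (a : Fin q → ℝ≥0) (s : ℝ≥0) :
    (univ.filter (fun i => s < sortDesc a i)).card = (univ.filter (fun k => s < a k)).card := by
  set e : Fin q ≃ Fin q := Fin.revPerm.trans (Tuple.sort a) with he
  have h1 : ∀ i, sortDesc a i = a (e i) := fun i => rfl
  apply Finset.card_bij' (fun i _ => e i) (fun k _ => e.symm k)
  · intro i hi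
    simp only [mem_filter, mem_univ, true_and] at hi ⊢
    rwa [h1] at hi
  · intro k hk
    simp only [mem_filter, mem_univ, true_and] at hk ⊢
    rw [h1, Equiv.apply_symm_apply]; exact hk
  · intro i _; simp
  · intro k _; simp

lemma slexLt_of_threshold {q : ℕ} (b a : Fin q → ℝ≥0) (t : ℝ≥0)
    (H : ∀ k, t < b k → b k ≤ a k)
    (k₀ : Fin q) (h1 : t < a k₀) (h2 : ¬ t < b k₀) :
    SLexLt b a := by
  have hsub : ∀ s, t ≤ s → (univ.filter (fun k => s < b k)) ⊆ (univ.filter (fun k => s < a k)) := by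
    intro s hs k hk
    simp only [mem_filter, mem_univ, true_and] at hk ⊢
    exact lt_of_lt_of_le hk (H k (lt_of_le_of_lt hs hk))
  have hlt : (univ.filter (fun k => t < b k)).card < (univ.filter (fun k => t < a k)).card := by
    apply Finset.card_lt_card
    refine ⟨hsub t le_rfl, fun hsub2 => h2 ?_⟩
    have := hsub2 (by simp [h1] : k₀ ∈ univ.filter (fun k => t < a k))
    simpa using this
  set B := sortDesc b with hB
  set A := sortDesc a with hA
  have hAanti : Antitone A := antitone_sortDesc a
  have hBanti : Antitone B := antitone_sortDesc b
  have hDne : (univ.filter (fun i => B i ≠ A i)).Nonempty := by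
    by_contra h
    rw [Finset.not_nonempty_iff_eq_empty, Finset.filter_eq_empty_iff] at h
    have hBA : ∀ i, B i = A i := fun i => by simpa using h (mem_univ i)
    have : (univ.filter (fun i => t < B i)).card = (univ.filter (fun i => t < A i)).card := by
      congr 1; apply Finset.filter_congr; intro i _; simp [hBA i]
    rw [card_sortDesc, card_sortDesc] at this
    omega
  set m := (univ.filter (fun i => B i ≠ A i)).min' hDne with hm
  have hmem : B m ≠ A m := by
    have := Finset.min'_mem (univ.filter (fun i => B i ≠ A i)) hDne
    simpa [← hm] using this
  have hpre : ∀ i, i < m → B i = A i := by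
    intro i hi
    by_contra hne
    exact absurd (Finset.min'_le _ i (by simpa using hne)) (not_le.mpr hi)
  refine ⟨m, hpre, ?_⟩
  rcases lt_trichotomy (B m) (A m) with h | h | h
  · exact h
  · exact absurd h hmem
  · -- A m < B m, derive contradiction
    exfalso
    rcases le_or_gt t (A m) with hta | hta
    · -- count at s = A m
      have hc1 : (univ.filter (fun i => A m < B i)).card ≤ (univ.filter (fun i => A m < A i)).card := by
        rw [card_sortDesc, card_sortDesc]
        exact Finset.card_le_card (hsub (A m) hta)
      have hIic : Finset.Iic m ⊆ univ.filter (fun i => A m < B i) := by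
        intro i hi
        simp only [Finset.mem_Iic] at hi
        simp only [mem_filter, mem_univ, true_and]
        exact lt_of_lt_of_le h (hBanti hi)
      have hIio : univ.filter (fun i => A m < A i) ⊆ Finset.Iio m := by
        intro i hi
        simp only [mem_filter, mem_univ, true_and] at hi
        simp only [Finset.mem_Iio]
        by_contra hle
        exact absurd (hAanti (not_lt.mp hle)) (not_le.mpr hi)
      have c1 := Finset.card_le_card hIic
      have c2 := Finset.card_le_card hIio
      rw [Fin.card_Iic] at c1
      rw [Fin.card_Iio] at c2
      omega
    · -- A m < t : count at t
      have hAsub : univ.filter (fun i => t < A i) ⊆ univ.filter (fun i => t < B i) := by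
        intro i hi
        simp only [mem_filter, mem_univ, true_and] at hi ⊢
        have him : i < m := by
          by_contra hle
          exact absurd (lt_of_lt_of_le hi (hAanti (not_lt.mp hle))) (not_lt.mpr hta.le)
        rw [hpre i him]; exact hi
      have := Finset.card_le_card hAsub
      rw [card_sortDesc, card_sortDesc] at this
      omega

lemma slexLtOn_of_threshold {ι : Type*} [Fintype ι] (b a : ι → ℝ≥0) (t : ℝ≥0)
    (H : ∀ k, t < b k → b k ≤ a k)
    (k₀ : ι) (h1 : t < a k₀) (h2 : ¬ t < b k₀) :
    SLexLtOn b a := by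
  refine slexLt_of_threshold _ _ t (fun k hk => H _ hk) (Fintype.equivFin ι k₀) ?_ ?_
  · simpa using h1
  · simpa using h2
lemma slexLtOn_of_L {κ : Type*} [Fintype κ] (b a : κ → ℝ≥0) (L : ℝ≥0) (hL : 0 < L)
    (H : ∀ k, L ≤ b k → b k ≤ a k) (k₀ : κ) (h1 : L ≤ a k₀) (h2 : b k₀ < L) :
    SLexLtOn b a := by
  classical
  have ht : (univ.filter (fun k => b k < L)).sup b < L := by
    rw [Finset.sup_lt_iff (by simpa using hL)]
    intro k hk
    simpa using (Finset.mem_filter.mp hk).2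
  refine slexLtOn_of_threshold b a ((univ.filter (fun k => b k < L)).sup b) ?_ k₀
    (lt_of_lt_of_le ht h1) ?_
  · intro k hk
    apply H
    by_contra hlt
    have hmem : k ∈ univ.filter (fun k => b k < L) :=
      Finset.mem_filter.mpr ⟨mem_univ k, not_le.mp hlt⟩
    exact absurd (Finset.le_sup (f := b) hmem) (not_le.mpr hk)
  · have hmem : k₀ ∈ univ.filter (fun k => b k < L) :=
      Finset.mem_filter.mpr ⟨mem_univ k₀, h2⟩
    exact not_lt.mpr (Finset.le_sup (f := b) hmem)

/-- An infinite bottleneck congestion game has the LIP both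
for `φ = π` and for `ψ_{i,f}(ξ) = c_f(ℓ_f(ξ))` if `f ∈ F_i(ξ)` and `0`
otherwise: both strictly decrease in the sorted lexicographical order along
every improving move between feasible profiles. -/
theorem stmt_15 {ι F : Type*} [Fintype ι] [Nonempty ι] [Fintype F] [Nonempty F]
    [DecidableEq F] {ni : ι → ℕ} (hni : ∀ i, 0 < ni i)
    (strat : ∀ i, Fin (ni i) → Finset F) (hstrat : ∀ i j, (strat i j).Nonempty)
    (d : ι → ℝ≥0) (hd : ∀ i, 0 < d i)
    (c : F → ℝ≥0 → ℝ≥0) (hc : ∀ f, Monotone (c f)) :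
    ∀ ξ ν : ∀ i, Fin (ni i) → ℝ≥0,
      (∀ i, ∑ j, ξ i j = d i) → (∀ i, ∑ j, ν i j = d i) →
      ImprovingMove (btlCost c strat) ξ ν →
      SLexLtOn (btlCost c strat ν) (btlCost c strat ξ) ∧
      SLexLtOn
        (fun p : ι × F => if p.2 ∈ usedFac strat ν p.1 then c p.2 (facLoad strat ν p.2) else 0)
        (fun p : ι × F => if p.2 ∈ usedFac strat ξ p.1 then c p.2 (facLoad strat ξ p.2) else 0) := by
  
  classical
  intro ξ ν hξ hν himp
  obtain ⟨S, hS, hout, hS₂⟩ := himp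
  have hne : ∀ (ρ : ∀ i, Fin (ni i) → ℝ≥0), (∀ i, ∑ j, ρ i j = d i) →
      ∀ i, (usedFac strat ρ i).Nonempty := by
    intro ρ hρ i
    have hj : ∃ j, 0 < ρ i j := by
      by_contra h
      push_neg at h
      have h0 : ∑ j, ρ i j = 0 :=
        Finset.sum_eq_zero (fun j _ => le_antisymm (h j) zero_le)
      rw [hρ i] at h0
      exact absurd h0 (hd i).ne'
    obtain ⟨j, hj⟩ := hj
    obtain ⟨f, hf⟩ := hstrat i j
    exact ⟨f, Finset.mem_filter.mpr ⟨mem_univ f, j, hf, hj⟩⟩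
  obtain ⟨i₀, hi₀S, hi₀⟩ := Finset.exists_mem_eq_sup' hS (btlCost c strat ξ)
  have hLmax : ∀ i ∈ S, btlCost c strat ξ i ≤ btlCost c strat ξ i₀ := by
    intro i hi
    rw [← hi₀]
    exact Finset.le_sup' _ hi
  have hL0 : 0 < btlCost c strat ξ i₀ := zero_le.trans_lt (hS₂ i₀ hi₀S)
  have hload : ∀ f, btlCost c strat ξ i₀ ≤ c f (facLoad strat ν f) →
      facLoad strat ν f ≤ facLoad strat ξ f := by
    intro f hf
    by_contra hgt
    push_neg at hgt
    rw [facLoad, facLoad] at hgt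
    obtain ⟨i, -, hi⟩ := Finset.exists_lt_of_sum_lt hgt
    obtain ⟨j, hjmem, hj⟩ := Finset.exists_lt_of_sum_lt hi
    have hjf : f ∈ strat i j := (Finset.mem_filter.mp hjmem).2
    have hiS : i ∈ S := by
      by_contra h
      rw [hout i h] at hj
      exact lt_irrefl _ hj
    have hfu : f ∈ usedFac strat ν i :=
      Finset.mem_filter.mpr ⟨mem_univ f, j, hjf, zero_le.trans_lt hj⟩
    have h1 : c f (facLoad strat ν f) ≤ btlCost c strat ν i :=
      Finset.le_sup (f := fun f => c f (facLoad strat ν f)) hfu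
    exact absurd (((h1.trans_lt (hS₂ i hiS)).trans_le (hLmax i hiS))) (not_lt.mpr hf)
  have hnotS : ∀ k, btlCost c strat ξ i₀ ≤ btlCost c strat ν k → k ∉ S := by
    intro k hk hkS
    exact absurd ((hS₂ k hkS).trans_le (hLmax k hkS)) (not_lt.mpr hk)
  have husedeq : ∀ k ∉ S, usedFac strat ν k = usedFac strat ξ k := by
    intro k hk
    simp only [usedFac, hout k hk]
  have hπ : ∀ k, btlCost c strat ξ i₀ ≤ btlCost c strat ν k →
      btlCost c strat ν k ≤ btlCost c strat ξ k := by
    intro k hk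
    have hkS := hnotS k hk
    have he := husedeq k hkS
    have hneν : (usedFac strat ν k).Nonempty := by rw [he]; exact hne ξ hξ k
    obtain ⟨f, hfmem, hfval⟩ :=
      Finset.exists_mem_eq_sup (usedFac strat ν k) hneν (fun f => c f (facLoad strat ν f))
    have h2 : btlCost c strat ν k = c f (facLoad strat ν f) := hfval
    have h3 : facLoad strat ν f ≤ facLoad strat ξ f := hload f (h2 ▸ hk)
    have hfξ : f ∈ usedFac strat ξ k := he ▸ hfmem
    calc btlCost c strat ν k = c f (facLoad strat ν f) := h2
      _ ≤ c f (facLoad strat ξ f) := hc f h3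
      _ ≤ btlCost c strat ξ k := Finset.le_sup (f := fun f => c f (facLoad strat ξ f)) hfξ
  constructor
  · exact slexLtOn_of_L _ _ (btlCost c strat ξ i₀) hL0 hπ i₀ le_rfl (hS₂ i₀ hi₀S)
  · obtain ⟨f₀, hf₀mem, hf₀⟩ :=
      Finset.exists_mem_eq_sup (usedFac strat ξ i₀) (hne ξ hξ i₀)
        (fun f => c f (facLoad strat ξ f))
    apply slexLtOn_of_L _ _ (btlCost c strat ξ i₀) hL0 ?_ (i₀, f₀) ?_ ?_
    · rintro ⟨k, f⟩ hp
      dsimp only at hp ⊢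
      by_cases hfu : f ∈ usedFac strat ν k
      · rw [if_pos hfu] at hp
        have hbk : btlCost c strat ξ i₀ ≤ btlCost c strat ν k :=
          hp.trans (Finset.le_sup (f := fun f => c f (facLoad strat ν f)) hfu)
        have hkS := hnotS k hbk
        have hfξ : f ∈ usedFac strat ξ k := (husedeq k hkS) ▸ hfu
        rw [if_pos hfu, if_pos hfξ]
        exact hc f (hload f hp)
      · rw [if_neg hfu] at hp
        exact absurd hp (not_le.mpr hL0)
    · dsimp only
      rw [if_pos hf₀mem]
      exact le_of_eq hf₀
    · dsimp only
      by_cases hfu : f₀ ∈ usedFac strat ν i₀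
      · rw [if_pos hfu]
        exact (Finset.le_sup (f := fun f => c f (facLoad strat ν f)) hfu).trans_lt (hS₂ i₀ hi₀S)
      · rw [if_neg hfu]
        exact hL0
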